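/- Let S ≥ 1 and let ε > 0. Suppose c ∈ C¹([0,1]) with p ↦ p·c(p) convex on [0,1]. Define for stochastic matrices P ∈ 𝕊^S (rows in the probability simplex) the costs e_i(P,V) = Σ_{j=1}^S P_{ij}(c(P_{ij}) + ε log(P_{ij}) + F(i,θ) + V(j)). Then the map g: 𝕊^S → ℝ^{S×S} defined by g_{ij}(P) = ∂e_i(P,V)/∂P_{ij} = P_{ij} c'(P_{ij}) + c(P_{ij}) + ε log(P_{ij}) + ε + V(j) + F(i,θ) is diagonally strictly convex: for all P¹ ≠ P² in 𝕊^S with all entries positive, Σ_{i,j} (P¹_{ij} − P²_{ij})(g_{ij}(P¹) − g_{ij}(P²)) > 0. -/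

import Mathlib

open Set

/-- The "marginal cost" function `h p = p * c' p + c p` is monotone on `Icc 0 1`
when `p ↦ p * c p` is convex there. -/
lemma aux_h_mono {c c' : ℝ → ℝ}
    (hc : ∀ p ∈ Set.Icc (0:ℝ) 1, HasDerivWithinAt c (c' p) (Set.Icc (0:ℝ) 1) p)
    (hconv : ConvexOn ℝ (Set.Icc (0:ℝ) 1) (fun p => p * c p))
    {a b : ℝ} (ha : a ∈ Set.Icc (0:ℝ) 1) (hb : b ∈ Set.Icc (0:ℝ) 1) (hab : a ≤ b) :
    a * c' a + c a ≤ b * c' b + c b := by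
  rcases eq_or_lt_of_le hab with rfl | hlt
  · exact le_rfl
  · have hda : HasDerivWithinAt (fun p => p * c p) (a * c' a + c a) (Set.Icc (0:ℝ) 1) a := by
      exact ((hasDerivWithinAt_id a _ : HasDerivWithinAt (fun x : ℝ => x) 1 (Set.Icc (0:ℝ) 1) a).mul (hc a ha)).congr_deriv (by simp only [id]; ring)
    have hdb : HasDerivWithinAt (fun p => p * c p) (b * c' b + c b) (Set.Icc (0:ℝ) 1) b := by
      exact ((hasDerivWithinAt_id b _ : HasDerivWithinAt (fun x : ℝ => x) 1 (Set.Icc (0:ℝ) 1) b).mul (hc b hb)).congr_deriv (by simp only [id]; ring)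
    have h1 := hconv.le_slope_of_hasDerivWithinAt ha hb hlt hda
    have h2 := hconv.slope_le_of_hasDerivWithinAt ha hb hlt hdb
    linarith

theorem stmt6 (S : ℕ) (hS : 1 ≤ S) (ε : ℝ) (hε : 0 < ε)
    (c c' : ℝ → ℝ)
    (hc : ∀ p ∈ Set.Icc (0:ℝ) 1, HasDerivWithinAt c (c' p) (Set.Icc (0:ℝ) 1) p)
    (hconv : ConvexOn ℝ (Set.Icc (0:ℝ) 1) (fun p => p * c p))
    (V : Fin S → ℝ) (F : Fin S → ℝ)
    (P₁ P₂ : Fin S → Fin S → ℝ)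
    (hP₁pos : ∀ i j, 0 < P₁ i j) (hP₁row : ∀ i, ∑ j, P₁ i j = 1)
    (hP₂pos : ∀ i j, 0 < P₂ i j) (hP₂row : ∀ i, ∑ j, P₂ i j = 1)
    (hne : P₁ ≠ P₂) :
    0 < ∑ i, ∑ j,
      (P₁ i j - P₂ i j) *
        ((P₁ i j * c' (P₁ i j) + c (P₁ i j) + ε * Real.log (P₁ i j) + ε + V j + F i)
          - (P₂ i j * c' (P₂ i j) + c (P₂ i j) + ε * Real.log (P₂ i j) + ε + V j + F i)) := by
  -- entries lie in Icc 0 1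
  have hmem : ∀ (P : Fin S → Fin S → ℝ), (∀ i j, 0 < P i j) → (∀ i, ∑ j, P i j = 1) →
      ∀ i j, P i j ∈ Set.Icc (0:ℝ) 1 := by
    intro P hpos hrow i j
    refine ⟨(hpos i j).le, ?_⟩
    have := Finset.single_le_sum (f := fun j => P i j)
      (fun k _ => (hpos i k).le) (Finset.mem_univ j)
    rw [hrow i] at this; exact this
  have hmem₁ := hmem P₁ hP₁pos hP₁row
  have hmem₂ := hmem P₂ hP₂pos hP₂row
  -- per-term nonnegativity and strictness
  set T : Fin S → Fin S → ℝ := fun i j =>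
      (P₁ i j - P₂ i j) *
        ((P₁ i j * c' (P₁ i j) + c (P₁ i j) + ε * Real.log (P₁ i j) + ε + V j + F i)
          - (P₂ i j * c' (P₂ i j) + c (P₂ i j) + ε * Real.log (P₂ i j) + ε + V j + F i))
    with hT
  have hTge : ∀ i j, T i j ≥ 0 ∧ (P₁ i j ≠ P₂ i j → 0 < T i j) := by
    intro i j
    set a := P₁ i j; set b := P₂ i j
    have hconvterm : 0 ≤ (a - b) * ((a * c' a + c a) - (b * c' b + c b)) := by
      rcases le_total a b with h | h
      · have := aux_h_mono hc hconv (hmem₁ i j) (hmem₂ i j) h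
        nlinarith
      · have := aux_h_mono hc hconv (hmem₂ i j) (hmem₁ i j) h
        nlinarith
    have hlogterm : 0 ≤ (a - b) * (Real.log a - Real.log b) ∧
        (a ≠ b → 0 < (a - b) * (Real.log a - Real.log b)) := by
      constructor
      · rcases le_total a b with h | h
        · have hl := Real.log_le_log (hP₁pos i j) h
          exact mul_nonneg_of_nonpos_of_nonpos (by linarith) (by linarith)
        · have hl := Real.log_le_log (hP₂pos i j) h
          exact mul_nonneg (by linarith) (by linarith)
      · intro hab
        rcases lt_or_gt_of_ne hab with h | h
        · have := Real.log_lt_log (hP₁pos i j) h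
          have h1 : a - b < 0 := by linarith
          have h2 : Real.log a - Real.log b < 0 := by linarith
          exact mul_pos_of_neg_of_neg h1 h2
        · have := Real.log_lt_log (hP₂pos i j) h
          exact mul_pos (by linarith) (by linarith)
    have hTexp : T i j = (a - b) * ((a * c' a + c a) - (b * c' b + c b))
        + ε * ((a - b) * (Real.log a - Real.log b)) := by
      simp only [hT]; ring
    constructor
    · rw [hTexp]
      exact add_nonneg hconvterm (mul_nonneg hε.le hlogterm.1)
    · intro hab
      rw [hTexp]
      have := hlogterm.2 hab
      nlinarith
  -- there is a differing entry
  obtain ⟨i₀, j₀, hij⟩ : ∃ i j, P₁ i j ≠ P₂ i j := by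
    by_contra h
    push_neg at h
    exact hne (funext fun i => funext fun j => h i j)
  refine Finset.sum_pos' (fun i _ => Finset.sum_nonneg fun j _ => (hTge i j).1) ⟨i₀,
    Finset.mem_univ i₀, Finset.sum_pos' (fun j _ => (hTge i₀ j).1)
      ⟨j₀, Finset.mem_univ j₀, (hTge i₀ j₀).2 hij⟩⟩
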